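/- Let $K \subset \mathbb{R}^2$ be a compact set which is intervally thin in two linearly independent directions $v_1, v_2 \in S^1$. Assume that the set of pairs $(x,y) \in \mathbb{R}^2 \times \mathbb{R}^2$ with $x \neq y$ for which the intersection $K \cap [x,y]$ of $K$ with the closed segment $[x,y]$ is at most countable is dense in $\mathbb{R}^2 \times \mathbb{R}^2$. Then $K$ is $c$-removable. -/

import Mathlib

set_option linter.unusedVariables false
set_option linter.unreachableTactic false
set_option linter.unusedTactic false
set_option maxHeartbeats 1000000

/-- `f` is locally convex on the open set `U`: every point of `U` has an open convex
neighbourhood `V ⊆ U` on which `f` is convex. -/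
def IsLocallyConvexOn (U : Set (EuclideanSpace ℝ (Fin 2)))
    (f : EuclideanSpace ℝ (Fin 2) → ℝ) : Prop :=
  ∀ x ∈ U, ∃ V : Set (EuclideanSpace ℝ (Fin 2)),
    IsOpen V ∧ Convex ℝ V ∧ x ∈ V ∧ V ⊆ U ∧ ConvexOn ℝ V f

/-- A closed set `A ⊆ ℝ²` is `c`-removable if every function continuous on `ℝ²` and
locally convex on `ℝ² \ A` is convex. -/
def CRemovable (A : Set (EuclideanSpace ℝ (Fin 2))) : Prop :=
  ∀ f : EuclideanSpace ℝ (Fin 2) → ℝ,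
    Continuous f → IsLocallyConvexOn Aᶜ f → ConvexOn ℝ Set.univ f

/-- `A` is intervally thin in the direction `v`. -/
def IntervallyThinIn (A : Set (EuclideanSpace ℝ (Fin 2)))
    (v : EuclideanSpace ℝ (Fin 2)) : Prop :=
  ∀ x y : EuclideanSpace ℝ (Fin 2), (∃ t : ℝ, x - y = t • v) → ∀ ε > 0,
    ∃ x' ∈ Metric.ball x ε, ∃ y' ∈ Metric.ball y ε, segment ℝ x' y' ∩ A = ∅


open Set Filter Topology

section Aux

abbrev E2 := EuclideanSpace ℝ (Fin 2)

/-- chord/convexity predicate on a set of reals (product form, no division) -/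
def CP (s : Set ℝ) (g : ℝ → ℝ) : Prop :=
  ∀ ⦃x⦄, x ∈ s → ∀ ⦃z⦄, z ∈ s → ∀ ⦃y⦄, x < y → y < z →
    (z - x) * g y ≤ (z - y) * g x + (y - x) * g z

def SC (φ : ℝ → ℝ) : Prop :=
  ∀ ⦃x y z : ℝ⦄, x < y → y < z → (z - x) * φ y ≤ (z - y) * φ x + (y - x) * φ z

variable {g : ℝ → ℝ}

lemma CP.mono {s t : Set ℝ} {g : ℝ → ℝ} (hst : s ⊆ t) (h : CP t g) : CP s g :=
  fun _ hx _ hz _ hxy hyz => h (hst hx) (hst hz) hxy hyz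

/-- transfer a lower slope bound rightwards across a chord inequality -/
lemma slope_lower {g : ℝ → ℝ} {x y z m : ℝ} (hxy : x < y) (hyz : y < z)
    (hch : (z - x) * g y ≤ (z - y) * g x + (y - x) * g z)
    (hm : m * (y - x) ≤ g y - g x) : m * (z - y) ≤ g z - g y := by
  have h2 : (z - y) * (g y - g x) ≤ (y - x) * (g z - g y) := by nlinarith [hch]
  have h3 : m * (y - x) * (z - y) ≤ (g y - g x) * (z - y) :=
    mul_le_mul_of_nonneg_right hm (by linarith)
  have h4 : (y - x) * (m * (z - y)) ≤ (y - x) * (g z - g y) := by nlinarith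
  exact le_of_mul_le_mul_left h4 (by linarith)

/-- transfer an upper slope bound leftwards across a chord inequality -/
lemma slope_upper {g : ℝ → ℝ} {x y z m : ℝ} (hxy : x < y) (hyz : y < z)
    (hch : (z - x) * g y ≤ (z - y) * g x + (y - x) * g z)
    (hm : g z - g y ≤ m * (z - y)) : g y - g x ≤ m * (y - x) := by
  have h2 : (z - y) * (g y - g x) ≤ (y - x) * (g z - g y) := by nlinarith [hch]
  have h3 : (g z - g y) * (y - x) ≤ m * (z - y) * (y - x) :=
    mul_le_mul_of_nonneg_right hm (by linarith)
  have h4 : (z - y) * (g y - g x) ≤ (z - y) * (m * (y - x)) := by nlinarith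
  exact le_of_mul_le_mul_left h4 (by linarith)

lemma chord_of_slopes {g : ℝ → ℝ} {x y z m : ℝ} (hxy : x < y) (hyz : y < z)
    (h1 : g y - g x ≤ m * (y - x)) (h2 : m * (z - y) ≤ g z - g y) :
    (z - x) * g y ≤ (z - y) * g x + (y - x) * g z := by
  have h3 : (g y - g x) * (z - y) ≤ m * (y - x) * (z - y) :=
    mul_le_mul_of_nonneg_right h1 (by linarith)
  have h4 : m * (z - y) * (y - x) ≤ (g z - g y) * (y - x) :=
    mul_le_mul_of_nonneg_right h2 (by linarith)
  nlinarith [h3, h4]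

lemma cp_glue {a b c d : ℝ} (hbc : b < c)
    (h1 : CP (Ioo a c) g) (h2 : CP (Ioo b d) g) : CP (Ioo a d) g := by
  set u₁ : ℝ := b + (c - b)/3 with hu₁
  set u₂ : ℝ := b + 2*(c - b)/3 with hu₂
  have hbu₁ : b < u₁ := by rw [hu₁]; linarith
  have hu₁u₂ : u₁ < u₂ := by rw [hu₁, hu₂]; linarith
  have hu₂c : u₂ < c := by rw [hu₂]; linarith
  rintro x ⟨hax, hxd⟩ z ⟨haz, hzd⟩ y hxy hyz
  rcases lt_or_ge z c with hzc | hcz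
  · exact h1 ⟨hax, by linarith⟩ ⟨by linarith, hzc⟩ hxy hyz
  rcases lt_or_ge b x with hbx | hxb
  · exact h2 ⟨hbx, by linarith⟩ ⟨by linarith, hzd⟩ hxy hyz
  -- now a < x ≤ b < c ≤ z < d
  have hxc : x < c := by linarith
  have hbz : b < z := by linarith
  rcases lt_or_ge y u₁ with hyu₁ | hu₁y
  · -- y < u₁ : push lower bound m := slope x y through y < u₁ < u₂ < z
    set m : ℝ := (g y - g x)/(y - x) with hm
    have hyx : (0:ℝ) < y - x := by linarith
    have hme : m * (y - x) = g y - g x := div_mul_cancel₀ _ (ne_of_gt hyx)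
    have s1 : m * (u₁ - y) ≤ g u₁ - g y :=
      slope_lower hxy hyu₁ (h1 ⟨hax, hxc⟩ ⟨by linarith, by linarith⟩ hxy hyu₁) hme.le
    have s2 : m * (u₂ - u₁) ≤ g u₂ - g u₁ :=
      slope_lower hyu₁ hu₁u₂ (h1 ⟨by linarith, by linarith⟩ ⟨by linarith, hu₂c⟩ hyu₁ hu₁u₂) s1
    have hu₂z : u₂ < z := by linarith
    have s3 : m * (z - u₂) ≤ g z - g u₂ :=
      slope_lower hu₁u₂ hu₂z (h2 ⟨hbu₁, by linarith⟩ ⟨hbz, hzd⟩ hu₁u₂ hu₂z) s2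
    exact chord_of_slopes hxy hyz hme.ge (by linarith)
  rcases lt_or_ge y c with hyc | hcy
  · -- u₁ ≤ y < c
    set w : ℝ := (y + c)/2 with hw
    have hyw : y < w := by rw [hw]; linarith
    have hwc : w < c := by rw [hw]; linarith
    have hwz : w < z := by linarith
    set m : ℝ := (g y - g x)/(y - x) with hm
    have hyx : (0:ℝ) < y - x := by linarith
    have hme : m * (y - x) = g y - g x := div_mul_cancel₀ _ (ne_of_gt hyx)
    have s1 : m * (w - y) ≤ g w - g y :=
      slope_lower hxy hyw (h1 ⟨hax, hxc⟩ ⟨by linarith, hwc⟩ hxy hyw) hme.le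
    have s2 : m * (z - w) ≤ g z - g w :=
      slope_lower hyw hwz (h2 ⟨by linarith, by linarith⟩ ⟨hbz, hzd⟩ hyw hwz) s1
    exact chord_of_slopes hxy hyz hme.ge (by linarith)
  · -- c ≤ y : pull upper bound M := slope y z through x < u₁ < u₂ < y
    set M : ℝ := (g z - g y)/(z - y) with hM
    have hzy : (0:ℝ) < z - y := by linarith
    have hMe : M * (z - y) = g z - g y := div_mul_cancel₀ _ (ne_of_gt hzy)
    have hu₂y : u₂ < y := by linarith
    have s1 : g y - g u₂ ≤ M * (y - u₂) :=
      slope_upper hu₂y hyz (h2 ⟨by linarith, by linarith⟩ ⟨hbz, hzd⟩ hu₂y hyz) hMe.ge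
    have s2 : g u₂ - g u₁ ≤ M * (u₂ - u₁) :=
      slope_upper hu₁u₂ hu₂y (h2 ⟨hbu₁, by linarith⟩ ⟨by linarith, by linarith⟩ hu₁u₂ hu₂y) s1
    have hxu₁ : x < u₁ := by linarith
    have s3 : g u₁ - g x ≤ M * (u₁ - x) :=
      slope_upper hxu₁ hu₁u₂ (h1 ⟨hax, hxc⟩ ⟨by linarith, hu₂c⟩ hxu₁ hu₁u₂) s2
    exact chord_of_slopes hxy hyz (by linarith) hMe.le

/-- local convexity on an open interval implies convexity there -/
lemma cp_of_local {a b : ℝ}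
    (h : ∀ t ∈ Ioo a b, ∃ δ > 0, CP (Ioo (t - δ) (t + δ)) g) : CP (Ioo a b) g := by
  rintro x ⟨hax, hxb⟩ z ⟨haz, hzb⟩ y hxy hyz
  set z' : ℝ := (z + b)/2 with hz'
  have hzz' : z < z' := by rw [hz']; linarith
  have hz'b : z' < b := by rw [hz']; linarith
  obtain ⟨δ₀, hδ₀, hc₀⟩ := h x ⟨hax, hxb⟩
  obtain ⟨l, hal, hlx, hlδ⟩ : ∃ l, a < l ∧ l < x ∧ x - δ₀ ≤ l := by
    refine ⟨x - min δ₀ (x - a) / 2, ?_, ?_, ?_⟩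
    · have h1 : min δ₀ (x - a) ≤ x - a := min_le_right _ _
      linarith
    · have h0 : 0 < min δ₀ (x - a) := lt_min hδ₀ (by linarith)
      linarith
    · have h1 : min δ₀ (x - a) ≤ δ₀ := min_le_left _ _
      linarith
  set T : Set ℝ := {u | x < u ∧ u ≤ z' ∧ CP (Ioo l u) g} with hT
  obtain ⟨u₀, hu₀T⟩ : ∃ u₀, u₀ ∈ T := by
    refine ⟨min (x + δ₀ / 2) z', lt_min (by linarith) (by linarith), min_le_right _ _, ?_⟩
    refine CP.mono ?_ hc₀
    intro t ht
    rcases ht with ⟨h1', h2'⟩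
    have h3' := min_le_left (x + δ₀ / 2) z'
    exact ⟨by linarith, by linarith⟩
  have hTne : T.Nonempty := ⟨u₀, hu₀T⟩
  have hTbdd : BddAbove T := ⟨z', fun u hu => hu.2.1⟩
  obtain ⟨u', hu'⟩ : ∃ u', u' = sSup T := ⟨_, rfl⟩
  have hxu' : x < u' := hu' ▸ lt_of_lt_of_le hu₀T.1 (le_csSup hTbdd hu₀T)
  have hu'z' : u' ≤ z' := hu' ▸ csSup_le hTne (fun u hu => hu.2.1)
  have hlu' : l < u' := hlx.trans hxu'
  have hcc : CP (Ioo l u') g := by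
    rintro x₁ ⟨hlx₁, hx₁u'⟩ z₁ ⟨hlz₁, hz₁u'⟩ y₁ h₁ h₂
    obtain ⟨u, huT, hz₁u⟩ := exists_lt_of_lt_csSup hTne (hu' ▸ hz₁u')
    exact huT.2.2 ⟨hlx₁, by linarith⟩ ⟨hlz₁, hz₁u⟩ h₁ h₂
  have hu'z'' : u' = z' := by
    by_contra hne
    have hu'ltz' : u' < z' := lt_of_le_of_ne hu'z' hne
    obtain ⟨δ', hδ', hc'⟩ := h u' ⟨by linarith, by linarith⟩
    obtain ⟨δ'', hδ''0, hδ''δ', hδ''half⟩ :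
        ∃ δ'', 0 < δ'' ∧ δ'' ≤ δ' ∧ δ'' ≤ (u' - l)/2 :=
      ⟨min δ' ((u' - l)/2), lt_min hδ' (by linarith), min_le_left _ _, min_le_right _ _⟩
    have hlu'' : l < u' - δ'' := by linarith
    have hglue : CP (Ioo l (u' + δ'')) g := by
      refine cp_glue (show u' - δ'' < u' by linarith) hcc (CP.mono ?_ hc')
      intro t ht
      rcases ht with ⟨h1', h2'⟩
      exact ⟨by linarith, by linarith⟩
    have hu''T : min (u' + δ''/2) z' ∈ T := by
      refine ⟨lt_min (by linarith) (by linarith), min_le_right _ _, CP.mono ?_ hglue⟩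
      intro t ht
      rcases ht with ⟨h1', h2'⟩
      have h3' : min (u' + δ''/2) z' ≤ u' + δ''/2 := min_le_left _ _
      exact ⟨h1', by linarith⟩
    have h4' : min (u' + δ''/2) z' ≤ u' := (le_csSup hTbdd hu''T).trans_eq hu'.symm
    have h5' : u' < min (u' + δ''/2) z' := lt_min (by linarith) (by linarith)
    linarith
  exact (hu'z'' ▸ hcc) ⟨hlx, by linarith⟩ ⟨by linarith, by linarith⟩ hxy hyz

/-- closure to endpoints using continuity -/
lemma cp_closure {a b : ℝ} (hg : Continuous g) (h : CP (Ioo a b) g) :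
    ∀ ⦃x⦄, a ≤ x → ∀ ⦃z⦄, z ≤ b → ∀ ⦃y⦄, x < y → y < z →
      (z - x) * g y ≤ (z - y) * g x + (y - x) * g z := by
  intro x hax z hzb y hxy hyz
  have step1 : ∀ z' ∈ Ioo y z, (z' - x) * g y ≤ (z' - y) * g x + (y - x) * g z' := by
    intro z' hz'
    have key : ∀ x' ∈ Ioo x y, (z' - x') * g y ≤ (z' - y) * g x' + (y - x') * g z' := by
      intro x' hx'
      exact h ⟨by rcases hx' with ⟨h1', h2'⟩; linarith, by rcases hx' with ⟨h1', h2'⟩; linarith⟩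
        ⟨by rcases hz' with ⟨h1', h2'⟩; linarith, by rcases hz' with ⟨h1', h2'⟩; linarith⟩
        hx'.2 hz'.1
    have hlim : Tendsto (fun x' => (z' - y) * g x' + (y - x') * g z' - (z' - x') * g y)
        (𝓝[>] x) (𝓝 ((z' - y) * g x + (y - x) * g z' - (z' - x) * g y)) := by
      apply Tendsto.mono_left _ nhdsWithin_le_nhds
      exact (((continuous_const.mul hg).add (((continuous_const.sub continuous_id).mul
        continuous_const))).sub ((continuous_const.sub continuous_id).mul
        continuous_const)).continuousAt
    have hev : ∀ᶠ x' in 𝓝[>] x,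
        0 ≤ (z' - y) * g x' + (y - x') * g z' - (z' - x') * g y := by
      filter_upwards [Ioo_mem_nhdsGT_of_mem ⟨le_refl x, hxy⟩] with x' hx'
      linarith [key x' hx']
    have := ge_of_tendsto hlim hev
    linarith
  have hlim : Tendsto (fun z' => (z' - y) * g x + (y - x) * g z' - (z' - x) * g y)
      (𝓝[<] z) (𝓝 ((z - y) * g x + (y - x) * g z - (z - x) * g y)) := by
    apply Tendsto.mono_left _ nhdsWithin_le_nhds
    exact (((continuous_id.sub continuous_const).mul continuous_const).add
      (continuous_const.mul hg) |>.sub ((continuous_id.sub continuous_const).mul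
      continuous_const)).continuousAt
  have hev : ∀ᶠ z' in 𝓝[<] z,
      0 ≤ (z' - y) * g x + (y - x) * g z' - (z' - x) * g y := by
    filter_upwards [Ioo_mem_nhdsLT_of_mem ⟨hyz, le_refl z⟩] with z' hz'
    linarith [step1 z' hz']
  have := ge_of_tendsto hlim hev
  linarith

lemma perfect_countable_false (C : Set ℝ) (hC : Perfect C) (hne : C.Nonempty) (hc : C.Countable) : False := by
  obtain ⟨f, hrange, -, hinj⟩ := hC.exists_nat_bool_injection hne
  have h1 : (Set.range f).Countable := hc.mono hrange
  have h2 : Countable (ℕ → Bool) := by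
    have := h1.to_subtype
    exact Countable.of_equiv _ (Equiv.ofInjective f hinj).symm
  obtain ⟨g, hg⟩ := h2.exists_injective_nat
  classical
  have hj : Function.Injective (fun s : Set ℕ => (fun n => if n ∈ s then true else false : ℕ → Bool)) := by
    intro s t hst
    ext n
    have := congrFun hst n
    by_cases hn : n ∈ s <;> by_cases hm : n ∈ t <;> simp_all
  exact Function.cantor_injective _ (hg.comp hj)

lemma isolated_step {g : ℝ → ℝ} (hg : Continuous g) {t ε : ℝ} (hε : 0 < ε)
    (hl : CP (Ioo (t - ε) t) g) (hr : CP (Ioo t (t + ε)) g)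
    (hcorner : ∀ m c r₁ : ℝ, 0 < c → 0 < r₁ →
      ¬(∀ r, 0 < r → r ≤ r₁ → g (t + r) ≤ g t + m * r - c * r ∧
        g (t - r) ≤ g t - m * r - c * r)) :
    CP (Ioo (t - ε) (t + ε)) g := by
  have hL := cp_closure hg hl
  have hR := cp_closure hg hr
  -- crossing property
  have cross : ∀ ⦃p⦄, t - ε < p → p < t → ∀ ⦃q⦄, t < q → q < t + ε →
      (g t - g p) * (q - t) ≤ (g q - g t) * (t - p) := by
    intro p hp1 hp2 q hq1 hq2
    by_contra hcon
    push_neg at hcon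
    have htp : (0:ℝ) < t - p := by linarith
    have hqt : (0:ℝ) < q - t := by linarith
    set m₁ : ℝ := (g t - g p) / (t - p) with hm₁
    set m₂ : ℝ := (g q - g t) / (q - t) with hm₂
    have hm₁₂ : m₂ < m₁ := by
      rw [hm₁, hm₂, div_lt_div_iff₀ hqt htp]
      linarith
    have hc : (0:ℝ) < (m₁ - m₂)/2 := by linarith
    have hr₁ : (0:ℝ) < min (t - p) (q - t) / 2 := by
      have := lt_min htp hqt
      linarith [min_le_left (t-p) (q-t), lt_min htp hqt]
    refine hcorner ((m₁ + m₂)/2) ((m₁ - m₂)/2) (min (t - p) (q - t) / 2) hc hr₁ ?_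
    intro r hr0 hrle
    have hrq : r < q - t := by
      have := min_le_right (t - p) (q - t); linarith
    have hrp : r < t - p := by
      have := min_le_left (t - p) (q - t); linarith
    constructor
    · -- g (t+r) ≤ g t + m₂ * r
      have hch := hR (le_refl t) (le_of_lt hq2) (show t < t + r by linarith)
        (show t + r < q by linarith)
      -- (q - t) * g (t+r) ≤ (q - (t+r)) * g t + r * g q
      have h1 : (q - t) * (g (t + r) - g t) ≤ r * (g q - g t) := by nlinarith [hch]
      have h2 : g (t + r) - g t ≤ m₂ * r := by
        rw [hm₂, div_mul_eq_mul_div, le_div_iff₀ hqt]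
        nlinarith [h1]
      linarith
    · -- g (t-r) ≤ g t - m₁ * r
      have hch := hL (le_of_lt hp1) (le_refl t) (show p < t - r by linarith)
        (show t - r < t by linarith)
      have h1 : (t - p) * (g (t - r) - g t) ≤ r * (g p - g t) := by nlinarith [hch]
      have h2 : g (t - r) - g t ≤ (-m₁) * r := by
        have : (-m₁) * r = (g p - g t) * r / (t - p) := by
          rw [hm₁]; field_simp; ring
        rw [this, le_div_iff₀ htp]
        nlinarith [h1]
      have : g t - ((m₁ + m₂)/2) * r - ((m₁ - m₂)/2) * r = g t - m₁ * r := by ring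
      rw [this]
      linarith [h2]
  -- now prove CP on the union interval
  rintro x ⟨hx1, hx2⟩ z ⟨hz1, hz2⟩ y hxy hyz
  rcases le_or_gt z t with hzt | htz
  · exact hL (le_of_lt hx1) hzt hxy hyz
  rcases le_or_gt t x with htx | hxt
  · exact hR htx (le_of_lt hz2) hxy hyz
  -- x < t < z
  rcases lt_trichotomy y t with hyt | hyt | hyt
  · -- x < y < t < z
    set m : ℝ := (g t - g y) / (t - y) with hm
    have hty : (0:ℝ) < t - y := by linarith
    have hme : m * (t - y) = g t - g y := div_mul_cancel₀ _ (ne_of_gt hty)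
    have s1 : g y - g x ≤ m * (y - x) :=
      slope_upper hxy hyt (hL (le_of_lt hx1) (le_refl t) hxy hyt) hme.ge
    have s2 : m * (z - t) ≤ g z - g t := by
      have hcr := cross (by linarith) hyt htz hz2
      rw [hm, div_mul_eq_mul_div, div_le_iff₀ hty]
      nlinarith [hcr]
    have s3 : m * (z - y) ≤ g z - g y := by
      have : m * (z - y) = m * (t - y) + m * (z - t) := by ring
      rw [this, hme]; linarith
    exact chord_of_slopes hxy hyz s1 s3
  · -- y = t
    subst hyt
    have hcr := cross hx1 hxt htz hz2
    nlinarith [hcr]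
  · -- x < t < y < z
    set m : ℝ := (g y - g t) / (y - t) with hm
    have hyt' : (0:ℝ) < y - t := by linarith
    have hme : m * (y - t) = g y - g t := div_mul_cancel₀ _ (ne_of_gt hyt')
    have s1 : g y - g x ≤ m * (y - x) := by
      have hcr := cross hx1 hxt hyt (by linarith)
      have htx' : (0:ℝ) < t - x := by linarith
      have h1 : g t - g x ≤ m * (t - x) := by
        rw [hm, div_mul_eq_mul_div, le_div_iff₀ hyt']
        nlinarith [hcr]
      have h2 : m * (y - x) = m * (y - t) + m * (t - x) := by ring
      rw [h2, hme]; linarith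
    have s2 : m * (z - y) ≤ g z - g y :=
      slope_lower hyt hyz (hR (le_refl t) (le_of_lt hz2) hyt hyz) hme.le
    exact chord_of_slopes hxy hyz s1 s2

lemma oneD {g : ℝ → ℝ} (hg : Continuous g) {S : Set ℝ} (hS : S.Countable)
    (hloc : ∀ t ∈ Ioo (0:ℝ) 1, t ∉ S → ∃ δ > 0, CP (Ioo (t - δ) (t + δ)) g)
    (hcorner : ∀ b ∈ Ioo (0:ℝ) 1, ∀ m c r₁ : ℝ, 0 < c → 0 < r₁ →
      ¬(∀ r, 0 < r → r ≤ r₁ → g (b + r) ≤ g b + m * r - c * r ∧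
        g (b - r) ≤ g b - m * r - c * r)) :
    ∀ ⦃x⦄, (0:ℝ) ≤ x → ∀ ⦃z⦄, z ≤ 1 → ∀ ⦃y⦄, x < y → y < z →
      (z - x) * g y ≤ (z - y) * g x + (y - x) * g z := by
  set U : Set ℝ := {t | ∃ δ > 0, CP (Ioo (t - δ) (t + δ)) g} with hU
  set B : Set ℝ := Ioo (0:ℝ) 1 \ U with hB
  have hBS : B ⊆ S := by
    intro t ht
    by_contra hts
    exact ht.2 (hloc t ht.1 hts)
  -- points of U have a neighbourhood inside U
  have hUopen : ∀ t ∈ U, ∃ δ > 0, ∀ s, |s - t| < δ → s ∈ U := by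
    rintro t ⟨δ, hδ, hcp⟩
    refine ⟨δ/2, by linarith, fun s hs => ⟨δ/2, by linarith, CP.mono ?_ hcp⟩⟩
    intro u hu
    rcases hu with ⟨h1, h2⟩
    rcases abs_lt.1 hs with ⟨h3, h4⟩
    exact ⟨by linarith, by linarith⟩
  have hBU : ∀ t ∈ closure B, t ∉ U := by
    intro t htcl htU
    obtain ⟨δ, hδ, hball⟩ := hUopen t htU
    obtain ⟨y, hy⟩ := (Metric.mem_closure_iff.1 htcl) δ hδ
    have : y ∈ U := by
      apply hball y
      rw [Real.dist_eq, abs_sub_comm] at hy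
      exact hy.2
    exact hy.1.2 this
  have hclB : ∀ t ∈ closure B, t ∈ Ioo (0:ℝ) 1 → t ∈ B :=
    fun t htcl htI => ⟨htI, hBU t htcl⟩
  have hempty : B = ∅ := by
    by_contra hne
    rw [← Ne, ← nonempty_iff_ne_empty] at hne
    have hclne : (closure B).Nonempty := hne.closure
    have hclsub : closure B ⊆ insert 0 (insert 1 B) := by
      intro t htcl
      have htIcc : t ∈ Icc (0:ℝ) 1 := by
        have hsub : closure B ⊆ closure (Ioo (0:ℝ) 1) :=
          closure_mono (fun u hu => hu.1)
        have h2 := hsub htcl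
        rwa [closure_Ioo (by norm_num : (0:ℝ) ≠ 1)] at h2
      rcases eq_or_lt_of_le htIcc.1 with h0 | h0
      · exact Or.inl h0.symm
      rcases eq_or_lt_of_le htIcc.2 with h1 | h1
      · exact Or.inr (Or.inl h1)
      · exact Or.inr (Or.inr (hclB t htcl ⟨h0, h1⟩))
    have hclcnt : (closure B).Countable :=
      (((hS.mono hBS).insert 1).insert 0).mono hclsub
    refine perfect_countable_false (closure B) ⟨isClosed_closure, ?_⟩ hclne hclcnt
    intro t htcl
    rw [accPt_iff_nhds]
    intro V hV
    obtain ⟨ε, hε, hballV⟩ := Metric.mem_nhds_iff.1 hV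
    by_cases htB : t ∈ B
    · -- t is not isolated in B
      by_contra hcon
      push_neg at hcon
      have htI : t ∈ Ioo (0:ℝ) 1 := htB.1
      obtain ⟨ε', hε'0, hε'1, hε'2, hε'3⟩ :
          ∃ ε', 0 < ε' ∧ ε' ≤ ε ∧ t - ε' > 0 ∧ t + ε' < 1 := by
        refine ⟨min ε (min (t/2) ((1 - t)/2)), ?_, min_le_left _ _, ?_, ?_⟩
        · refine lt_min hε (lt_min (by linarith [htI.1]) (by linarith [htI.2]))
        · have := min_le_right ε (min (t/2) ((1 - t)/2))
          have := min_le_left (t/2) ((1 - t)/2)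
          have h5 := htI.1
          nlinarith [min_le_right ε (min (t/2) ((1 - t)/2)), min_le_left (t/2) ((1 - t)/2)]
        · have h5 := htI.2
          nlinarith [min_le_right ε (min (t/2) ((1 - t)/2)), min_le_right (t/2) ((1 - t)/2)]
      have hnoB : ∀ s, |s - t| < ε' → s ≠ t → s ∉ B := by
        intro s hs hst hsB
        refine hst (hcon s ⟨?_, subset_closure hsB⟩)
        apply hballV
        rw [Metric.mem_ball, Real.dist_eq]
        exact lt_of_lt_of_le hs hε'1
      have hsU : ∀ s, |s - t| < ε' → s ≠ t → s ∈ U := by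
        intro s hs hst
        have hsI : s ∈ Ioo (0:ℝ) 1 := by
          rcases abs_lt.1 hs with ⟨h3, h4⟩
          exact ⟨by linarith, by linarith⟩
        by_contra hsU
        exact hnoB s hs hst ⟨hsI, hsU⟩
      have hleft : CP (Ioo (t - ε') t) g := by
        apply cp_of_local
        intro s hs
        rcases hs with ⟨h1, h2⟩
        obtain ⟨δ, hδ, hcp⟩ := hsU s (abs_lt.2 ⟨by linarith, by linarith⟩) (ne_of_lt h2)
        exact ⟨δ, hδ, hcp⟩
      have hright : CP (Ioo t (t + ε')) g := by
        apply cp_of_local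
        intro s hs
        rcases hs with ⟨h1, h2⟩
        obtain ⟨δ, hδ, hcp⟩ := hsU s (abs_lt.2 ⟨by linarith, by linarith⟩) (ne_of_gt h1)
        exact ⟨δ, hδ, hcp⟩
      have hCP : CP (Ioo (t - ε') (t + ε')) g :=
        isolated_step hg hε'0 hleft hright (hcorner t htI)
      exact (hBU t htcl) ⟨ε', hε'0, hCP⟩
    · -- t ∈ closure B \ B : any neighbourhood meets B in a point ≠ t
      obtain ⟨y, hy⟩ := (Metric.mem_closure_iff.1 htcl) ε hε
      refine ⟨y, ⟨?_, subset_closure hy.1⟩, ?_⟩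
      · apply hballV
        rw [Metric.mem_ball, Real.dist_eq, abs_sub_comm]
        rw [Real.dist_eq] at hy
        exact hy.2
      · intro hyt
        exact htB (hyt ▸ hy.1)
  -- B empty: conclude
  have hall : CP (Ioo (0:ℝ) 1) g := by
    apply cp_of_local
    intro t ht
    have htU : t ∈ U := by
      by_contra htU
      have : t ∈ B := ⟨ht, htU⟩
      rw [hempty] at this
      exact this
    exact htU
  exact cp_closure hg hall

lemma NCmain (G : ℝ → ℝ → ℝ) (hcont : Continuous fun p : ℝ × ℝ => G p.1 p.2)
    (h1 : ∀ t, SC (fun s => G s t)) (h2 : ∀ s, SC (fun t => G s t))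
    {c r₁ : ℝ} (hc : 0 < c) (hr : 0 < r₁)
    (hdiag : ∀ r, 0 < r → r ≤ r₁ → G r r ≤ -(c * r) ∧ G (-r) (-r) ≤ -(c * r))
    (hP : ∀ δ, 0 < δ → ∃ r, 0 < r ∧ r ≤ min δ r₁ ∧ c * r ≤ G r (-r)) : False := by
  -- Step C : initial lower bound on the positive horizontal axis
  have A0 : ∀ x, 0 < x → x ≤ r₁ → c * x ≤ G x 0 := by
    intro x hx hxr
    by_contra hcon
    push_neg at hcon
    have hε0 : 0 < (c * x - G x 0) / 2 := by linarith
    have hcx : Continuous fun t : ℝ => G x t :=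
      hcont.comp (continuous_const.prodMk continuous_id)
    obtain ⟨δ₃, hδ₃, hδ₃p⟩ :=
      Metric.continuousAt_iff.1 hcx.continuousAt ((c * x - G x 0) / 2) hε0
    obtain ⟨r, hr0, hrle, hrG⟩ := hP (min (δ₃/2) x) (lt_min (by linarith) hx)
    have hrx : r ≤ x := le_trans hrle (le_trans (min_le_left _ _) (min_le_right _ _))
    have hrr₁ : r ≤ r₁ := le_trans hrle (min_le_right _ _)
    have hrδ₃ : dist (-r) (0:ℝ) < δ₃ := by
      rw [Real.dist_eq]
      have : r ≤ δ₃/2 := le_trans hrle (le_trans (min_le_left _ _) (min_le_left _ _))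
      rw [abs_of_nonpos (by linarith : -r - 0 ≤ 0)]
      linarith
    have hnear := hδ₃p hrδ₃
    rw [Real.dist_eq] at hnear
    have hGd := (hdiag r hr0 hrr₁).2
    have hGx : c * x ≤ G x (-r) := by
      rcases eq_or_lt_of_le hrx with heq | hlt
      · rw [← heq]; exact hrG
      · have hch := h1 (-r) (show -r < r by linarith) hlt
        -- (x + r) * G r (-r) ≤ (x - r) * G (-r) (-r) + 2r * G x (-r)
        nlinarith [hch, hrG, hGd]
    have : |G x (-r) - G x 0| < (c * x - G x 0)/2 := hnear
    rcases abs_lt.1 this with ⟨hlo, hhi⟩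
    linarith
  -- bootstrap step 1 : axis lower bound transfers to negative vertical axis
  have ClaimAB : ∀ α, 0 ≤ α → (∀ x, 0 < x → x ≤ r₁ → α * x ≤ G x 0) →
      ∀ y, 0 < y → y ≤ r₁ → (α + c) * y ≤ G 0 (-y) := by
    intro α hα hA y hy hyr
    by_contra hcon
    push_neg at hcon
    have hε0 : 0 < (((α + c) * y) - G 0 (-y)) / 2 := by linarith
    have hcy : Continuous fun s : ℝ => G s (-y) :=
      hcont.comp (continuous_id.prodMk continuous_const)
    obtain ⟨δ₃, hδ₃, hδ₃p⟩ :=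
      Metric.continuousAt_iff.1 hcy.continuousAt _ hε0
    obtain ⟨s, hs0, hsδ, hsr⟩ : ∃ s, 0 < s ∧ s < δ₃ ∧ s ≤ r₁ :=
      ⟨min (δ₃/2) r₁, lt_min (by linarith) hr, by
        constructor
        · exact lt_of_le_of_lt (min_le_left _ _) (by linarith)
        · exact min_le_right _ _⟩
    have hGs0 : α * s ≤ G s 0 := hA s hs0 hsr
    have hGss : G s s ≤ -(c * s) := (hdiag s hs0 hsr).1
    -- second-variable convexity on the line first coordinate = s, triple (-y, 0, s)
    have hch := h2 s (show -y < 0 by linarith) hs0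
    -- (s + y) * G s 0 ≤ s * G s (-y) + y * G s s
    have hGsy : α * s + (α + c) * y ≤ G s (-y) := by nlinarith [hch, hGs0, hGss]
    have hnear := hδ₃p (show dist s 0 < δ₃ by rw [Real.dist_eq, sub_zero, abs_of_pos hs0]; exact hsδ)
    rw [Real.dist_eq] at hnear
    rcases abs_lt.1 hnear with ⟨hlo, hhi⟩
    nlinarith [hGsy, hα, hs0]
  -- bootstrap step 2 : vertical bound transfers back to horizontal axis, gaining c
  have ClaimBA : ∀ β, 0 ≤ β → (∀ y, 0 < y → y ≤ r₁ → β * y ≤ G 0 (-y)) →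
      ∀ x, 0 < x → x ≤ r₁ → (β + c) * x ≤ G x 0 := by
    intro β hβ hB x hx hxr
    by_contra hcon
    push_neg at hcon
    have hε0 : 0 < (((β + c) * x) - G x 0) / 2 := by linarith
    have hcx : Continuous fun t : ℝ => G x t :=
      hcont.comp (continuous_const.prodMk continuous_id)
    obtain ⟨δ₃, hδ₃, hδ₃p⟩ :=
      Metric.continuousAt_iff.1 hcx.continuousAt _ hε0
    obtain ⟨t, ht0, htδ, htr⟩ : ∃ t, 0 < t ∧ t < δ₃ ∧ t ≤ r₁ :=
      ⟨min (δ₃/2) r₁, lt_min (by linarith) hr, by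
        constructor
        · exact lt_of_le_of_lt (min_le_left _ _) (by linarith)
        · exact min_le_right _ _⟩
    have hG0t : β * t ≤ G 0 (-t) := hB t ht0 htr
    have hGtt : G (-t) (-t) ≤ -(c * t) := (hdiag t ht0 htr).2
    -- first-variable convexity on the line second coordinate = -t, triple (-t, 0, x)
    have hch := h1 (-t) (show -t < 0 by linarith) hx
    -- (x + t) * G 0 (-t) ≤ x * G (-t) (-t) + t * G x (-t)
    have hGxt : β * t + (β + c) * x ≤ G x (-t) := by nlinarith [hch, hG0t, hGtt]
    have hnear := hδ₃p
      (show dist (-t) 0 < δ₃ by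
        rw [Real.dist_eq, abs_of_nonpos (by linarith : -t - 0 ≤ 0)]; linarith)
    rw [Real.dist_eq] at hnear
    rcases abs_lt.1 hnear with ⟨hlo, hhi⟩
    nlinarith [hGxt, hβ, ht0]
  -- iterate to get unbounded growth
  have iter : ∀ n : ℕ, ∀ x, 0 < x → x ≤ r₁ → ((2 * (n:ℝ) + 1) * c) * x ≤ G x 0 := by
    intro n
    induction n with
    | zero =>
      intro x hx hxr
      have := A0 x hx hxr
      push_cast
      nlinarith [this]
    | succ k ih =>
      have h0 : (0:ℝ) ≤ (2 * (k:ℝ) + 1) * c := by positivity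
      have hAB := ClaimAB _ h0 ih
      have h1' : (0:ℝ) ≤ (2 * (k:ℝ) + 1) * c + c := by positivity
      have hBA := ClaimBA _ h1' hAB
      intro x hx hxr
      have := hBA x hx hxr
      have hcast : ((2 * ((k:ℝ) + 1) + 1) * c) = ((2 * (k:ℝ) + 1) * c + c) + c := by ring
      push_cast
      rw [hcast]
      have hx' : 0 ≤ x := le_of_lt hx
      nlinarith [this, hc, hx]
  obtain ⟨n, hn⟩ := exists_nat_gt (G r₁ 0 / (c * r₁))
  have h5 := iter n r₁ hr (le_refl r₁)
  have h6 : G r₁ 0 / (c * r₁) * (c * r₁) < (n:ℝ) * (c * r₁) :=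
    mul_lt_mul_of_pos_right hn (by positivity)
  rw [div_mul_cancel₀ _ (by positivity : (c * r₁) ≠ 0)] at h6
  nlinarith [h5, h6, mul_pos hc hr, Nat.cast_nonneg (α := ℝ) n]

lemma NC (G : ℝ → ℝ → ℝ) (hcont : Continuous fun p : ℝ × ℝ => G p.1 p.2)
    (h1 : ∀ t, SC (fun s => G s t)) (h2 : ∀ s, SC (fun t => G s t))
    {c r₁ : ℝ} (hc : 0 < c) (hr : 0 < r₁) (hG0 : G 0 0 = 0)
    (hdiag : ∀ r, 0 < r → r ≤ r₁ → G r r ≤ -(c * r) ∧ G (-r) (-r) ≤ -(c * r)) :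
    False := by
  have four : ∀ r, 0 < r → r ≤ r₁ → 2 * (c * r) ≤ G r (-r) + G (-r) r := by
    intro r hr0 hrr
    have hlt : -r < (0:ℝ) := by linarith
    have t1 := h2 r hlt hr0
    have t2 := h2 (-r) hlt hr0
    have t3 := h1 0 hlt hr0
    have d := hdiag r hr0 hrr
    simp only at t1 t2 t3
    nlinarith [t1, t2, t3, d.1, d.2, hG0]
  by_cases hP : ∀ δ, 0 < δ → ∃ r, 0 < r ∧ r ≤ min δ r₁ ∧ c * r ≤ G r (-r)
  · exact NCmain G hcont h1 h2 hc hr hdiag hP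
  · push_neg at hP
    obtain ⟨δ₀, hδ₀, hfail⟩ := hP
    refine NCmain (fun s t => G t s) (hcont.comp continuous_swap)
      (fun t => h2 t) (fun s => h1 s) hc hr
      (fun r h h' => ⟨(hdiag r h h').1, (hdiag r h h').2⟩) ?_
    intro δ hδ
    set r : ℝ := min (min δ δ₀) r₁ with hrdef
    have hr0 : 0 < r := lt_min (lt_min hδ hδ₀) hr
    have hrr₁ : r ≤ r₁ := min_le_right _ _
    have hrδ₀ : r ≤ min δ₀ r₁ :=
      le_min (le_trans (min_le_left _ _) (min_le_right _ _)) hrr₁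
    have hrδ : r ≤ min δ r₁ :=
      le_min (le_trans (min_le_left _ _) (min_le_left _ _)) hrr₁
    have hless := hfail r hr0 hrδ₀
    have h4 := four r hr0 hrr₁
    exact ⟨r, hr0, hrδ, by show c * r ≤ G (-r) r; linarith⟩

lemma param_chord {f : E2 → ℝ} {P u : E2} {x y z : ℝ} (hxy : x < y) (hyz : y < z)
    (h : ∀ a, 0 ≤ a → a ≤ 1 →
      f (a • (P + z • u) + (1 - a) • (P + x • u)) ≤
        a * f (P + z • u) + (1 - a) * f (P + x • u)) :
    (z - x) * f (P + y • u) ≤ (z - y) * f (P + x • u) + (y - x) * f (P + z • u) := by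
  have hzx : (0:ℝ) < z - x := by linarith
  set a : ℝ := (y - x) / (z - x) with ha
  have ha0 : 0 ≤ a := div_nonneg (by linarith) (by linarith)
  have ha1 : a ≤ 1 := by rw [ha, div_le_one hzx]; linarith
  have hcomb := h a ha0 ha1
  have hy' : a * z + (1 - a) * x = y := by
    rw [ha]; field_simp; all_goals ring
  have hpt : a • (P + z • u) + (1 - a) • (P + x • u) = P + y • u := by
    rw [← hy']; module
  rw [hpt] at hcomb
  have h1 : (z - x) * a = y - x := by rw [ha]; field_simp; all_goals ring
  have h2 : (z - x) * (1 - a) = z - y := by rw [ha]; field_simp; all_goals ring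
  have h3 := mul_le_mul_of_nonneg_left hcomb (le_of_lt hzx)
  have h4 : (z - x) * (a * f (P + z • u) + (1 - a) * f (P + x • u)) =
      (y - x) * f (P + z • u) + (z - y) * f (P + x • u) := by
    rw [← h1, ← h2]; ring
  linarith [h3, h4.le, h4.ge]

lemma cont_param (f : E2 → ℝ) (hf : Continuous f) (P u : E2) :
    Continuous fun s : ℝ => f (P + s • u) :=
  hf.comp (continuous_const.add (continuous_id.smul continuous_const))

/-- local convexity gives local CP along a line -/
lemma cp_nbhd {f : E2 → ℝ} {U : Set E2} (hlc : IsLocallyConvexOn U f) {P u : E2} {t : ℝ}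
    (hmem : P + t • u ∈ U) :
    ∃ δ > 0, CP (Ioo (t - δ) (t + δ)) (fun s => f (P + s • u)) := by
  obtain ⟨V, hVo, hVc, hVm, hVU, hVcx⟩ := hlc _ hmem
  have hco : IsOpen ((fun s : ℝ => P + s • u) ⁻¹' V) :=
    hVo.preimage (continuous_const.add (continuous_id.smul continuous_const))
  obtain ⟨δ, hδ0, hball⟩ := Metric.isOpen_iff.1 hco t hVm
  refine ⟨δ, hδ0, ?_⟩
  rintro x ⟨hx1, hx2⟩ z ⟨hz1, hz2⟩ y hxy hyz
  have hxV : P + x • u ∈ V := hball (by rw [Metric.mem_ball, Real.dist_eq, abs_lt]; constructor <;> linarith)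
  have hzV : P + z • u ∈ V := hball (by rw [Metric.mem_ball, Real.dist_eq, abs_lt]; constructor <;> linarith)
  refine param_chord hxy hyz ?_
  intro a ha0 ha1
  exact hVcx.2 hzV hxV ha0 (by linarith) (by ring)

/-- chord inequality on a whole segment avoiding `K` -/
lemma chord_of_free_segment {f : E2 → ℝ} (hf : Continuous f) {K : Set E2}
    (hlc : IsLocallyConvexOn Kᶜ f) {X Y : E2} (hseg : segment ℝ X Y ∩ K = ∅)
    {a : ℝ} (ha0 : 0 ≤ a) (ha1 : a ≤ 1) :
    f (a • X + (1 - a) • Y) ≤ a * f X + (1 - a) * f Y := by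
  rcases eq_or_lt_of_le ha0 with h0 | h0
  · rw [← h0]; simp
  rcases eq_or_lt_of_le ha1 with h1 | h1
  · rw [h1]; simp
  have hKc : segment ℝ X Y ⊆ Kᶜ := by
    intro z hz hzK
    have : z ∈ segment ℝ X Y ∩ K := ⟨hz, hzK⟩
    rw [hseg] at this
    exact this
  set u : E2 := X - Y with hu
  have hmem : ∀ t ∈ Icc (0:ℝ) 1, Y + t • u ∈ Kᶜ := by
    intro t ht
    apply hKc
    rw [segment_symm, segment_eq_image' ℝ Y X]
    exact ⟨t, ht, rfl⟩
  have hloc : ∀ t ∈ Ioo (0:ℝ) 1, ∃ δ > 0, CP (Ioo (t - δ) (t + δ))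
      (fun s => f (Y + s • u)) := by
    intro t ht
    exact cp_nbhd hlc (hmem t (Ioo_subset_Icc_self ht))
  have hcp := cp_of_local hloc
  have hchord := cp_closure (cont_param f hf Y u) hcp (le_refl (0:ℝ)) (le_refl (1:ℝ)) h0 h1
  -- (1-0) * f (Y + a • u) ≤ (1-a) * f (Y + 0•u) + a * f (Y + 1•u)
  have e0 : Y + (0:ℝ) • u = Y := by simp
  have e1 : Y + (1:ℝ) • u = X := by simp [hu]
  have ea : Y + a • u = a • X + (1 - a) • Y := by rw [hu]; module
  rw [e0, e1, ea] at hchord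
  linarith

/-- directional convexity from interval thinness -/
lemma fact1 {K : Set E2} {v : E2} (hthin : IntervallyThinIn K v)
    {f : E2 → ℝ} (hf : Continuous f) (hlc : IsLocallyConvexOn Kᶜ f) :
    ∀ p q : E2, (∃ t : ℝ, p - q = t • v) → ∀ a : ℝ, 0 ≤ a → a ≤ 1 →
      f (a • p + (1 - a) • q) ≤ a * f p + (1 - a) * f q := by
  intro p q hpar a ha0 ha1
  have hex : ∀ n : ℕ, ∃ pq : E2 × E2, dist pq.1 p < 1/(n+1) ∧ dist pq.2 q < 1/(n+1) ∧
      segment ℝ pq.1 pq.2 ∩ K = ∅ := by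
    intro n
    obtain ⟨p', hp', q', hq', hseg⟩ := hthin p q hpar (1/(n+1)) (by positivity)
    exact ⟨(p', q'), Metric.mem_ball.1 hp', Metric.mem_ball.1 hq', hseg⟩
  choose F hF1 hF2 hF3 using hex
  have key : ∀ n, f (a • (F n).1 + (1 - a) • (F n).2) ≤
      a * f (F n).1 + (1 - a) * f (F n).2 :=
    fun n => chord_of_free_segment hf hlc (hF3 n) ha0 ha1
  have hten : Tendsto (fun n : ℕ => (1:ℝ)/(n+1)) atTop (𝓝 0) :=
    tendsto_one_div_add_atTop_nhds_zero_nat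
  have hp_lim : Tendsto (fun n => (F n).1) atTop (𝓝 p) := by
    rw [tendsto_iff_dist_tendsto_zero]
    exact squeeze_zero (fun n => dist_nonneg) (fun n => (hF1 n).le) hten
  have hq_lim : Tendsto (fun n => (F n).2) atTop (𝓝 q) := by
    rw [tendsto_iff_dist_tendsto_zero]
    exact squeeze_zero (fun n => dist_nonneg) (fun n => (hF2 n).le) hten
  have hcomb_lim : Tendsto (fun n => a • (F n).1 + (1 - a) • (F n).2) atTop
      (𝓝 (a • p + (1 - a) • q)) :=
    (hp_lim.const_smul a).add (hq_lim.const_smul (1 - a))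
  have hL : Tendsto (fun n => f (a • (F n).1 + (1 - a) • (F n).2)) atTop
      (𝓝 (f (a • p + (1 - a) • q))) := (hf.tendsto _).comp hcomb_lim
  have hR : Tendsto (fun n => a * f (F n).1 + (1 - a) * f (F n).2) atTop
      (𝓝 (a * f p + (1 - a) * f q)) :=
    (((hf.tendsto _).comp hp_lim).const_mul a).add
      (((hf.tendsto _).comp hq_lim).const_mul (1 - a))
  exact le_of_tendsto_of_tendsto' hL hR key

/-- directional convexity gives `SC` along any parallel parametrised line -/
lemma sc_line {f : E2 → ℝ} {v : E2}
    (hfa : ∀ p q : E2, (∃ t : ℝ, p - q = t • v) → ∀ a : ℝ, 0 ≤ a → a ≤ 1 →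
      f (a • p + (1 - a) • q) ≤ a * f p + (1 - a) * f q)
    (P u : E2) (hu : ∃ k : ℝ, u = k • v) : SC (fun s => f (P + s • u)) := by
  intro x y z hxy hyz
  refine param_chord hxy hyz ?_
  intro a ha0 ha1
  obtain ⟨k, hk⟩ := hu
  refine hfa (P + z • u) (P + x • u) ⟨(z - x) * k, ?_⟩ a ha0 ha1
  rw [hk]
  module

lemma SC_affine {φ : ℝ → ℝ} (hφ : SC φ) (α β : ℝ) : SC (fun s => φ s + (α * s + β)) := by
  intro x y z hxy hyz
  have h := hφ hxy hyz
  simp only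
  nlinarith [h]

lemma corner_discharge {f : E2 → ℝ} (hf : Continuous f) {v₁ v₂ : E2}
    (hfa1 : ∀ p q : E2, (∃ t : ℝ, p - q = t • v₁) → ∀ a : ℝ, 0 ≤ a → a ≤ 1 →
      f (a • p + (1 - a) • q) ≤ a * f p + (1 - a) * f q)
    (hfa2 : ∀ p q : E2, (∃ t : ℝ, p - q = t • v₂) → ∀ a : ℝ, 0 ≤ a → a ≤ 1 →
      f (a • p + (1 - a) • q) ≤ a * f p + (1 - a) * f q)
    {p w : E2} {c₁ c₂ : ℝ} (hw : w = c₁ • v₁ + c₂ • v₂)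
    {b m c r₁ : ℝ} (hc : 0 < c) (hr : 0 < r₁)
    (hdecay : ∀ r, 0 < r → r ≤ r₁ →
      f (p + (b + r) • w) ≤ f (p + b • w) + m * r - c * r ∧
      f (p + (b - r) • w) ≤ f (p + b • w) - m * r - c * r) : False := by
  set P : E2 := p + b • w with hP
  set u₁ : E2 := c₁ • v₁ with hu₁
  set u₂ : E2 := c₂ • v₂ with hu₂
  set G : ℝ → ℝ → ℝ :=
    fun s t => f (P + s • u₁ + t • u₂) - f P - m * ((s + t)/2) with hG
  have hcont : Continuous fun q : ℝ × ℝ => G q.1 q.2 := by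
    apply Continuous.sub
    · apply Continuous.sub
      · exact hf.comp (((continuous_const.add
          (continuous_fst.smul continuous_const)).add
          (continuous_snd.smul continuous_const)))
      · exact continuous_const
    · exact (continuous_const.mul ((continuous_fst.add continuous_snd).div_const 2))
  have hsc1 : ∀ t, SC (fun s => G s t) := by
    intro t
    have hbase : SC (fun s => f ((P + t • u₂) + s • u₁)) :=
      sc_line hfa1 (P + t • u₂) u₁ ⟨c₁, rfl⟩
    have heq : (fun s => G s t) =
        fun s => f ((P + t • u₂) + s • u₁) + ((- m/2) * s + (- f P - m * (t/2))) := by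
      funext s
      simp only [hG]
      have harg : P + s • u₁ + t • u₂ = (P + t • u₂) + s • u₁ := by abel
      rw [harg]
      ring
    rw [heq]
    exact SC_affine hbase _ _
  have hsc2 : ∀ s, SC (fun t => G s t) := by
    intro s
    have hbase : SC (fun t => f ((P + s • u₁) + t • u₂)) :=
      sc_line hfa2 (P + s • u₁) u₂ ⟨c₂, rfl⟩
    have heq : (fun t => G s t) =
        fun t => f ((P + s • u₁) + t • u₂) + ((- m/2) * t + (- f P - m * (s/2))) := by
      funext t
      simp only [hG]
      ring
    rw [heq]
    exact SC_affine hbase _ _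
  have hG0 : G 0 0 = 0 := by
    simp [hG]
  have hdiag : ∀ r, 0 < r → r ≤ r₁ → G r r ≤ -(c * r) ∧ G (-r) (-r) ≤ -(c * r) := by
    intro r hr0 hrle
    obtain ⟨hd1, hd2⟩ := hdecay r hr0 hrle
    have harg1 : P + r • u₁ + r • u₂ = p + (b + r) • w := by
      rw [hP, hu₁, hu₂, hw]; module
    have harg2 : P + (-r) • u₁ + (-r) • u₂ = p + (b - r) • w := by
      rw [hP, hu₁, hu₂, hw]; module
    constructor
    · simp only [hG]; rw [harg1]
      have : m * ((r + r)/2) = m * r := by ring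
      rw [this]; linarith
    · simp only [hG]; rw [harg2]
      have : m * ((-r + -r)/2) = - (m * r) := by ring
      rw [this]; linarith
  exact NC G hcont hsc1 hsc2 hc hr hG0 hdiag

end Aux

theorem statement1 (K : Set (EuclideanSpace ℝ (Fin 2))) (hK : IsCompact K)
    (v₁ v₂ : EuclideanSpace ℝ (Fin 2)) (hv₁ : ‖v₁‖ = 1) (hv₂ : ‖v₂‖ = 1)
    (hind : LinearIndependent ℝ ![v₁, v₂])
    (hthin₁ : IntervallyThinIn K v₁) (hthin₂ : IntervallyThinIn K v₂)
    (hdense : Dense {p : EuclideanSpace ℝ (Fin 2) × EuclideanSpace ℝ (Fin 2) |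
      p.1 ≠ p.2 ∧ (K ∩ segment ℝ p.1 p.2).Countable}) :
    CRemovable K := by
  intro f hf hlc
  have hfa1 := fact1 hthin₁ hf hlc
  have hfa2 := fact1 hthin₂ hf hlc
  have hcard : Fintype.card (Fin 2) = Module.finrank ℝ E2 := by
    rw [finrank_euclideanSpace_fin, Fintype.card_fin]
  have hpair : ∀ p q : E2, (K ∩ segment ℝ p q).Countable → ∀ a : ℝ, 0 ≤ a → a ≤ 1 →
      f (a • q + (1 - a) • p) ≤ a * f q + (1 - a) * f p := by
    intro p q hcnt a ha0 ha1
    rcases eq_or_lt_of_le ha0 with h0 | h0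
    · rw [← h0]; simp
    rcases eq_or_lt_of_le ha1 with h1 | h1
    · rw [h1]; simp
    by_cases hpq : p = q
    · subst hpq
      rw [Convex.combo_self (by ring : a + (1 - a) = 1) p]
      linarith
    have hw0 : q - p ≠ 0 := sub_ne_zero.2 (Ne.symm hpq)
    set bas := basisOfLinearIndependentOfCardEqFinrank hind hcard with hbas
    have hcoe : ⇑bas = ![v₁, v₂] := coe_basisOfLinearIndependentOfCardEqFinrank hind hcard
    have hsum := bas.sum_repr (q - p)
    rw [Fin.sum_univ_two] at hsum
    have hb0 : bas 0 = v₁ := by rw [hcoe]; rfl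
    have hb1 : bas 1 = v₂ := by rw [hcoe]; rfl
    rw [hb0, hb1] at hsum
    set c₁ : ℝ := bas.repr (q - p) 0 with hc₁def
    set c₂ : ℝ := bas.repr (q - p) 1 with hc₂def
    have hweq : q - p = c₁ • v₁ + c₂ • v₂ := hsum.symm
    by_cases hc₁ : c₁ = 0
    · refine hfa2 q p ⟨c₂, ?_⟩ a (le_of_lt h0) (le_of_lt h1)
      rw [hweq, hc₁]; simp
    by_cases hc₂ : c₂ = 0
    · refine hfa1 q p ⟨c₁, ?_⟩ a (le_of_lt h0) (le_of_lt h1)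
      rw [hweq, hc₂]; simp
    -- generic direction : use the one-dimensional removability lemma
    have hg : Continuous fun t : ℝ => f (p + t • (q - p)) := cont_param f hf p (q - p)
    have hinj : Function.Injective (fun t : ℝ => p + t • (q - p)) := by
      intro s t hst
      simp only at hst
      have h2 : s • (q - p) = t • (q - p) := by
        have := add_left_cancel hst
        exact this
      have h3 : (s - t) • (q - p) = 0 := by rw [sub_smul, h2, sub_self]
      rcases smul_eq_zero.1 h3 with h4 | h4
      · linarith [sub_eq_zero.1 h4]
      · exact absurd h4 hw0
    have hScnt : ((fun t : ℝ => p + t • (q - p)) ⁻¹' (K ∩ segment ℝ p q)).Countable :=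
      hcnt.preimage hinj
    have hloc : ∀ t ∈ Ioo (0:ℝ) 1,
        t ∉ (fun t : ℝ => p + t • (q - p)) ⁻¹' (K ∩ segment ℝ p q) →
        ∃ δ > 0, CP (Ioo (t - δ) (t + δ)) (fun s => f (p + s • (q - p))) := by
      intro t ht hts
      have hseg : p + t • (q - p) ∈ segment ℝ p q := by
        rw [segment_eq_image' ℝ p q]
        exact ⟨t, Ioo_subset_Icc_self ht, rfl⟩
      have hKc : p + t • (q - p) ∈ Kᶜ := fun hKmem => hts ⟨hKmem, hseg⟩
      exact cp_nbhd hlc hKc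
    have hcorner : ∀ b ∈ Ioo (0:ℝ) 1, ∀ m c r₁ : ℝ, 0 < c → 0 < r₁ →
        ¬(∀ r, 0 < r → r ≤ r₁ →
          f (p + (b + r) • (q - p)) ≤ f (p + b • (q - p)) + m * r - c * r ∧
          f (p + (b - r) • (q - p)) ≤ f (p + b • (q - p)) - m * r - c * r) := by
      intro b _ m c r₁ hcpos hrpos hdecay
      exact corner_discharge hf hfa1 hfa2 hweq hcpos hrpos hdecay
    have hchord := oneD hg hScnt hloc hcorner (le_refl (0:ℝ)) (le_refl (1:ℝ)) h0 h1
    have e0 : p + (0:ℝ) • (q - p) = p := by simp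
    have e1 : p + (1:ℝ) • (q - p) = q := by simp
    have ea : p + a • (q - p) = a • q + (1 - a) • p := by module
    simp only [e0, e1, ea] at hchord
    linarith
  refine ⟨convex_univ, ?_⟩
  intro x _ y _ aa bb ha hb hab
  have hbb : bb = 1 - aa := by linarith
  subst hbb
  set C : Set (E2 × E2) :=
    {pq | f (aa • pq.1 + (1 - aa) • pq.2) ≤ aa * f pq.1 + (1 - aa) * f pq.2} with hC
  have hCc : IsClosed C := by
    apply isClosed_le
    · exact hf.comp ((continuous_fst.const_smul aa).add (continuous_snd.const_smul (1 - aa)))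
    · exact (continuous_const.mul (hf.comp continuous_fst)).add
        (continuous_const.mul (hf.comp continuous_snd))
  have hDC : {pp : E2 × E2 | pp.1 ≠ pp.2 ∧ (K ∩ segment ℝ pp.1 pp.2).Countable} ⊆ C := by
    rintro ⟨p₁, p₂⟩ ⟨-, hcnt⟩
    have hcnt' : (K ∩ segment ℝ p₂ p₁).Countable := by rwa [segment_symm]
    exact hpair p₂ p₁ hcnt' aa ha (by linarith)
  have hCl : (x, y) ∈ C := by
    have hcl : (x, y) ∈ closure {pp : E2 × E2 | pp.1 ≠ pp.2 ∧
        (K ∩ segment ℝ pp.1 pp.2).Countable} := hdense _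
    exact hCc.closure_subset_iff.2 hDC hcl
  exact hCl
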